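/- Let Γ'' = {(s,y) ∈ ℝ × ℝ^n : θ(y) + h ≤ s ≤ Θ(y) − h} and Γ' = {(s,y) : θ(y) + h/2 ≤ s ≤ Θ(y) − h/2} where θ, Θ are L-Lipschitz and h > 0. Then the distance between Γ'' and the complement of Γ' is at least h / (2√(1 + L²)). -/
import Mathlib

lemma aux_cs (L a b : ℝ) (hL : 0 ≤ L) (ha : 0 ≤ a) (hb : 0 ≤ b) :
    a + L * b ≤ Real.sqrt (1 + L ^ 2) * Real.sqrt (a ^ 2 + b ^ 2) := by
  rw [← Real.sqrt_mul (by positivity)]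
  calc a + L * b = Real.sqrt ((a + L * b) ^ 2) := (Real.sqrt_sq (by positivity)).symm
    _ ≤ Real.sqrt ((1 + L ^ 2) * (a ^ 2 + b ^ 2)) :=
        Real.sqrt_le_sqrt (by nlinarith [sq_nonneg (b - L * a)])

theorem distance_between_shrunk_graph_sets (n : ℕ) (L h : ℝ) (hh : 0 < h)
    (hL : 0 ≤ L)
    (Θ θ : EuclideanSpace ℝ (Fin n) → ℝ)
    (hΘlip : ∀ y₁ y₂, |Θ y₁ - Θ y₂| ≤ L * ‖y₁ - y₂‖)
    (hθlip : ∀ y₁ y₂, |θ y₁ - θ y₂| ≤ L * ‖y₁ - y₂‖) :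
    let Γ' : Set (ℝ × EuclideanSpace ℝ (Fin n)) :=
      {p | θ p.2 + h / 2 ≤ p.1 ∧ p.1 ≤ Θ p.2 - h / 2}
    let Γ'' : Set (ℝ × EuclideanSpace ℝ (Fin n)) :=
      {p | θ p.2 + h ≤ p.1 ∧ p.1 ≤ Θ p.2 - h}
    ∀ (s : ℝ) (y : EuclideanSpace ℝ (Fin n)) (s' : ℝ)
      (y' : EuclideanSpace ℝ (Fin n)),
      (s, y) ∈ Γ'' → (s', y') ∉ Γ' →
        h / (2 * Real.sqrt (1 + L ^ 2)) ≤
          Real.sqrt ((s - s') ^ 2 + ‖y - y'‖ ^ 2) := by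
  intro Γ' Γ'' s y s' y' hmem hnot
  obtain ⟨h1, h2⟩ := hmem
  have hS : 0 < Real.sqrt (1 + L ^ 2) := Real.sqrt_pos.mpr (by positivity)
  rw [div_le_iff₀ (by positivity)]
  have key : h / 2 ≤ |s - s'| + L * ‖y - y'‖ := by
    by_contra hcon
    push_neg at hcon
    apply hnot
    have hθ := abs_le.mp (hθlip y y')
    have hΘ := abs_le.mp (hΘlip y y')
    have h4 := abs_le.mp (show |s - s'| ≤ h / 2 - L * ‖y - y'‖ by linarith [abs_nonneg (s - s')])
    simp only [Set.mem_setOf_eq] at h1 h2 ⊢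
    constructor <;> linarith
  have haux := aux_cs L |s - s'| ‖y - y'‖ hL (abs_nonneg _) (norm_nonneg _)
  rw [sq_abs] at haux
  nlinarith [haux, key]
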